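/- Let V_1,…,V_n be isometries on a Hilbert space K with orthogonal ranges (V_s* V_t = δ_{st} 1). Let P^{(s)} := SOT-lim_{p→∞} ∑_{|α|≤p} V_α (1 − ∑_m V_m V_m*) V_α* and P^{(c)} := SOT-lim_{q→∞} ∑_{|α|=q} V_α V_α*, where α ranges over words in n letters and V_α denotes the corresponding product. Then P^{(s)} + P^{(c)} = 1 and P^{(s)} P^{(c)} = 0. -/

import Mathlib

open ContinuousLinearMap Filter

/-- The product `V_{α 0} ∘ V_{α 1} ∘ ⋯` associated with a word `α` of length `q`. -/
noncomputable def wordProd {K : Type*} [NormedAddCommGroup K] [InnerProductSpace ℂ K]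
    {n q : ℕ} (V : Fin n → K →L[ℂ] K) (α : Fin q → Fin n) : K →L[ℂ] K :=
  (List.ofFn fun j => V (α j)).prod

section Aux

variable {K : Type*} [NormedAddCommGroup K] [InnerProductSpace ℂ K] [CompleteSpace K]
variable {n : ℕ} (V : Fin n → K →L[ℂ] K)

lemma wordProd_zero (α : Fin 0 → Fin n) : wordProd V α = 1 := by
  simp [wordProd]

lemma wordProd_succ {q : ℕ} (α : Fin (q + 1) → Fin n) :
    wordProd V α = V (α 0) * wordProd V (Fin.tail α) := by
  simp [wordProd, List.ofFn_succ, Fin.tail]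

lemma adjoint_one' : adjoint (1 : K →L[ℂ] K) = 1 := by
  rw [← star_eq_adjoint, star_one]

lemma wordProd_snoc {q : ℕ} (α : Fin q → Fin n) (m : Fin n) :
    wordProd V (Fin.snoc α m) = wordProd V α * V m := by
  rw [wordProd, List.ofFn_succ', List.prod_concat]
  simp [wordProd]

lemma adjoint_mul (A B : K →L[ℂ] K) : adjoint (A * B) = adjoint B * adjoint A := by
  simp [mul_def, adjoint_comp]

lemma adjoint_wordProd_mul (horth : ∀ s t, adjoint (V s) * V t = if s = t then 1 else 0)
    {q : ℕ} (α β : Fin q → Fin n) :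
    adjoint (wordProd V α) * wordProd V β = if α = β then 1 else 0 := by
  induction q with
  | zero =>
    simp [wordProd_zero, Subsingleton.elim α β, adjoint_one']
  | succ q ih =>
    rw [wordProd_succ V α, wordProd_succ V β, adjoint_mul]
    have : adjoint (wordProd V (Fin.tail α)) * adjoint (V (α 0)) *
        (V (β 0) * wordProd V (Fin.tail β))
        = adjoint (wordProd V (Fin.tail α)) * ((adjoint (V (α 0)) * V (β 0)) *
          wordProd V (Fin.tail β)) := by noncomm_ring
    rw [this, horth]
    by_cases h0 : α 0 = β 0
    · rw [if_pos h0, one_mul, ih]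
      by_cases ht : Fin.tail α = Fin.tail β
      · rw [if_pos ht, if_pos]
        rw [← Fin.cons_self_tail α, ← Fin.cons_self_tail β, h0, ht]
      · rw [if_neg ht, if_neg]
        intro h; exact ht (by rw [h])
    · rw [if_neg h0, zero_mul, mul_zero, if_neg]
      intro h; exact h0 (by rw [h])

/-- The projection onto words of length `q`. -/
noncomputable def Qop (q : ℕ) : K →L[ℂ] K :=
  ∑ α : Fin q → Fin n, wordProd V α * adjoint (wordProd V α)

lemma Qop_zero : Qop V 0 = 1 := by
  simp [Qop, wordProd_zero, adjoint_one']

lemma Qop_succ_cons (q : ℕ) :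
    Qop V (q + 1) = ∑ m, V m * Qop V q * adjoint (V m) := by
  rw [Qop, ← Equiv.sum_comp (Fin.consEquiv fun _ => Fin n)]
  rw [Fintype.sum_prod_type]
  refine Finset.sum_congr rfl fun m _ => ?_
  rw [Qop, Finset.mul_sum, Finset.sum_mul]
  refine Finset.sum_congr rfl fun α _ => ?_
  have h1 : wordProd V ((Fin.consEquiv fun _ => Fin n) (m, α)) = V m * wordProd V α := by
    rw [show ((Fin.consEquiv fun _ => Fin n) (m, α)) = Fin.cons m α from rfl,
      wordProd_succ]
    simp [Fin.tail]
  rw [h1, adjoint_mul]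
  noncomm_ring

lemma Qop_succ_snoc (q : ℕ) :
    Qop V (q + 1) = ∑ α : Fin q → Fin n,
      wordProd V α * (∑ m, V m * adjoint (V m)) * adjoint (wordProd V α) := by
  rw [Qop, ← Equiv.sum_comp (Fin.snocEquiv fun _ => Fin n)]
  rw [Fintype.sum_prod_type]
  rw [Finset.sum_comm]
  refine Finset.sum_congr rfl fun α _ => ?_
  rw [Finset.mul_sum, Finset.sum_mul]
  refine Finset.sum_congr rfl fun m _ => ?_
  have h1 : wordProd V ((Fin.snocEquiv fun _ => Fin n) (m, α)) = wordProd V α * V m := by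
    rw [show ((Fin.snocEquiv fun _ => Fin n) (m, α)) = Fin.snoc α m from rfl,
      wordProd_snoc]
  rw [h1, adjoint_mul]
  noncomm_ring

lemma Qop_mul_Qop (horth : ∀ s t, adjoint (V s) * V t = if s = t then 1 else 0) :
    ∀ q r, q ≤ r → Qop V q * Qop V r = Qop V r := by
  intro q
  induction q with
  | zero => intro r _; rw [Qop_zero, one_mul]
  | succ q ih =>
    intro r hr
    obtain ⟨r', rfl⟩ : ∃ r', r = r' + 1 := ⟨r - 1, by omega⟩
    have hqr' : q ≤ r' := by omega
    rw [Qop_succ_cons V q, Qop_succ_cons V r', Finset.sum_mul_sum]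
    refine Finset.sum_congr rfl fun m _ => ?_
    have key : ∀ s : Fin n,
        V m * Qop V q * adjoint (V m) * (V s * Qop V r' * adjoint (V s))
        = if m = s then V m * Qop V r' * adjoint (V m) else 0 := by
      intro s
      have : V m * Qop V q * adjoint (V m) * (V s * Qop V r' * adjoint (V s))
          = V m * Qop V q * (adjoint (V m) * V s) * (Qop V r' * adjoint (V s)) := by noncomm_ring
      rw [this, horth]
      by_cases hms : m = s
      · subst hms
        rw [if_pos rfl, if_pos rfl, mul_one]
        have : V m * Qop V q * (Qop V r' * adjoint (V m))
            = V m * (Qop V q * Qop V r') * adjoint (V m) := by noncomm_ring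
        rw [this, ih r' hqr']
      · rw [if_neg hms, if_neg hms, mul_zero, zero_mul]
    rw [Finset.sum_congr rfl fun s _ => key s]
    simp

end Aux

theorem stmt7 {K : Type*} [NormedAddCommGroup K] [InnerProductSpace ℂ K] [CompleteSpace K]
    (n : ℕ) (V : Fin n → K →L[ℂ] K)
    (horth : ∀ s t, adjoint (V s) * V t = if s = t then 1 else 0)
    (Ps Pc : K →L[ℂ] K)
    (hPs : ∀ x : K, Tendsto (fun p : ℕ =>
      (∑ q ∈ Finset.range (p + 1), ∑ α : Fin q → Fin n,
        wordProd V α * ((1 : K →L[ℂ] K) - ∑ m, V m * adjoint (V m)) *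
          adjoint (wordProd V α)) x)
      atTop (nhds (Ps x)))
    (hPc : ∀ x : K, Tendsto (fun q : ℕ =>
      (∑ α : Fin q → Fin n, wordProd V α * adjoint (wordProd V α)) x)
      atTop (nhds (Pc x))) :
    Ps + Pc = 1 ∧ Ps * Pc = 0 := by
  -- the partial sums telescope
  have hT : ∀ q : ℕ, (∑ α : Fin q → Fin n,
      wordProd V α * ((1 : K →L[ℂ] K) - ∑ m, V m * adjoint (V m)) *
        adjoint (wordProd V α)) = Qop V q - Qop V (q + 1) := by
    intro q
    rw [Qop_succ_snoc]
    rw [show (Qop V q : K →L[ℂ] K) = ∑ α : Fin q → Fin n,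
      wordProd V α * adjoint (wordProd V α) from rfl]
    rw [← Finset.sum_sub_distrib]
    refine Finset.sum_congr rfl fun α _ => ?_
    rw [mul_sub, sub_mul, mul_one]
  have hsum : ∀ p : ℕ, (∑ q ∈ Finset.range (p + 1), ∑ α : Fin q → Fin n,
      wordProd V α * ((1 : K →L[ℂ] K) - ∑ m, V m * adjoint (V m)) *
        adjoint (wordProd V α)) = 1 - Qop V (p + 1) := by
    intro p
    calc (∑ q ∈ Finset.range (p + 1), ∑ α : Fin q → Fin n,
        wordProd V α * ((1 : K →L[ℂ] K) - ∑ m, V m * adjoint (V m)) *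
          adjoint (wordProd V α))
        = ∑ q ∈ Finset.range (p + 1), (Qop V q - Qop V (q + 1)) :=
          Finset.sum_congr rfl fun q _ => hT q
      _ = Qop V 0 - Qop V (p + 1) := Finset.sum_range_sub' (fun q => Qop V q) (p + 1)
      _ = 1 - Qop V (p + 1) := by rw [Qop_zero]
  have hQc : ∀ x : K, Tendsto (fun q : ℕ => Qop V q x) atTop (nhds (Pc x)) := hPc
  -- Ps = 1 - Pc
  have hPs' : Ps = 1 - Pc := by
    ext x
    have h1 : Tendsto (fun p : ℕ => x - Qop V (p + 1) x) atTop (nhds (Ps x)) := by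
      have := hPs x
      simp only [hsum] at this
      simpa using this
    have h2 : Tendsto (fun p : ℕ => x - Qop V (p + 1) x) atTop (nhds (x - Pc x)) :=
      Tendsto.const_sub x ((hQc x).comp (tendsto_add_atTop_nat 1))
    have := tendsto_nhds_unique h1 h2
    simpa using this
  -- Pc is idempotent
  have hidem : ∀ x : K, Pc (Pc x) = Pc x := by
    intro x
    have key : ∀ q : ℕ, Qop V q (Pc x) = Pc x := by
      intro q
      have h1 : Tendsto (fun r : ℕ => Qop V q (Qop V r x)) atTop
          (nhds (Qop V q (Pc x))) :=
        ((Qop V q).continuous.tendsto _).comp (hQc x)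
      have h2 : Tendsto (fun r : ℕ => Qop V q (Qop V r x)) atTop (nhds (Pc x)) := by
        refine (hQc x).congr' ?_
        filter_upwards [eventually_ge_atTop q] with r hr
        have := Qop_mul_Qop V horth q r hr
        calc Qop V r x = (Qop V q * Qop V r) x := by rw [this]
          _ = Qop V q (Qop V r x) := rfl
      exact tendsto_nhds_unique h1 h2
    have h1 : Tendsto (fun q : ℕ => Qop V q (Pc x)) atTop (nhds (Pc (Pc x))) := hQc (Pc x)
    have h2 : Tendsto (fun q : ℕ => Qop V q (Pc x)) atTop (nhds (Pc x)) := by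
      simp only [key]; exact tendsto_const_nhds
    exact tendsto_nhds_unique h1 h2
  constructor
  · rw [hPs']; abel
  · ext x
    rw [hPs']
    simp only [ContinuousLinearMap.mul_apply, ContinuousLinearMap.sub_apply, ContinuousLinearMap.one_apply, ContinuousLinearMap.zero_apply]
    rw [hidem x]
    simp
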